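/- For an n×n matrix A = [a b c d x^T; y1 y2 y3 y4 Z] (first row with scalars a,b,c,d followed by row vector x^T, remaining columns y1,y2,y3,y4 and block Z), the permanent satisfies per(A) = per([a·y2+b·y1, y3, y4, Z]) + per([y1, y2, c·y4+d·y3, Z]) + per([0 0 0 0 x^T; y1 y2 y3 y4 Z]). -/

import Mathlib

open Matrix Finset

section PermanentAux

variable {R : Type*} [CommRing R]

/-- Laplace-type expansion of the permanent along column `0`. -/
theorem permanent_succ_column_zero {n : ℕ} (A : Matrix (Fin n.succ) (Fin n.succ) R) :
    A.permanent = ∑ i : Fin n.succ, A i 0 * (A.submatrix i.succAbove Fin.succ).permanent := by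
  rw [Matrix.permanent, Finset.univ_perm_fin_succ, ← Finset.univ_product_univ]
  simp only [Finset.sum_map, Equiv.toEmbedding_apply, Finset.sum_product]
  refine Finset.sum_congr rfl fun i _ => Fin.cases ?_ (fun i => ?_) i
  · simp only [Matrix.permanent, Finset.mul_sum]
    refine Finset.sum_congr rfl fun σ _ => ?_
    rw [Fin.prod_univ_succ]
    simp [Equiv.Perm.decomposeFin_symm_apply_zero, Equiv.Perm.decomposeFin_symm_apply_succ]
  · rw [← Matrix.permanent_permute_cols i.cycleRange
      (A.submatrix (Fin.succ i).succAbove Fin.succ), Matrix.permanent, Finset.mul_sum]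
    refine Finset.sum_congr rfl fun σ _ => ?_
    rw [Fin.prod_univ_succ]
    simp [Equiv.Perm.decomposeFin_symm_apply_zero, Equiv.Perm.decomposeFin_symm_apply_succ,
      ← Fin.succAbove_cycleRange]

/-- Laplace-type expansion of the permanent along row `0`. -/
theorem permanent_succ_row_zero {n : ℕ} (A : Matrix (Fin n.succ) (Fin n.succ) R) :
    A.permanent = ∑ j : Fin n.succ, A 0 j * (A.submatrix Fin.succ j.succAbove).permanent := by
  rw [← Matrix.permanent_transpose A, permanent_succ_column_zero]
  refine Finset.sum_congr rfl fun i _ => ?_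
  rw [← Matrix.permanent_transpose]
  simp only [transpose_apply, transpose_submatrix, transpose_transpose]

/-- The permanent is additive in each column. -/
theorem permanent_updateCol_add' {m : Type*} [DecidableEq m] [Fintype m]
    (M : Matrix m m R) (j : m) (u v : m → R) :
    (M.updateCol j (u + v)).permanent
      = (M.updateCol j u).permanent + (M.updateCol j v).permanent := by
  simp only [Matrix.permanent, ← Finset.sum_add_distrib]
  refine Finset.sum_congr rfl fun p _ => ?_
  rw [← Finset.mul_prod_erase _ _ (Finset.mem_univ j),
      ← Finset.mul_prod_erase _ _ (Finset.mem_univ j),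
      ← Finset.mul_prod_erase _ _ (Finset.mem_univ j)]
  have h : ∀ i ∈ Finset.univ.erase j, ∀ w : m → R,
      (M.updateCol j w) (p i) i = M (p i) i := fun i hi w =>
    Matrix.updateCol_ne (Finset.ne_of_mem_erase hi)
  rw [Finset.prod_congr rfl (fun i hi => h i hi (u + v)),
      Finset.prod_congr rfl (fun i hi => h i hi u),
      Finset.prod_congr rfl (fun i hi => h i hi v)]
  simp [Matrix.updateCol_self, add_mul]

end PermanentAux

/-- Expansion (2): for an `(n+5)×(n+5)` matrix `A` with first row
`(a, b, c, d, xᵀ)` and remaining rows forming columns `y₁ y₂ y₃ y₄` and block `Z`,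
`per A = per [a·y₂+b·y₁, y₃, y₄, Z] + per [y₁, y₂, c·y₄+d·y₃, Z] + per [0 0 0 0 xᵀ; y₁ y₂ y₃ y₄ Z]`. -/
theorem permanent_hybrid_expansion {n : ℕ} {R : Type*} [CommRing R]
    (A : Matrix (Fin (n + 5)) (Fin (n + 5)) R) :
    A.permanent =
      (Matrix.of fun i j : Fin (n + 4) =>
          if (j : ℕ) = 0 then A 0 0 * A i.succ 1 + A 0 1 * A i.succ 0
          else A i.succ j.succ).permanent +
      (Matrix.of fun i j : Fin (n + 4) =>
          if (j : ℕ) = 2 then A 0 2 * A i.succ 3 + A 0 3 * A i.succ 2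
          else if (j : ℕ) < 2 then A i.succ (j.castSucc)
          else A i.succ j.succ).permanent +
      (Matrix.of fun i j : Fin (n + 5) =>
          if i = 0 ∧ (j : ℕ) < 4 then 0 else A i j).permanent := by
  -- the minors of `A` along row `0`
  set M : Fin (n + 5) → Matrix (Fin (n + 4)) (Fin (n + 4)) R :=
    fun j => A.submatrix Fin.succ j.succAbove with hM
  -- expansion of `A` along row `0`
  have expA : A.permanent = ∑ j, A 0 j * (M j).permanent := permanent_succ_row_zero A
  -- the third matrix expands to the tail of this sum
  have h3 : (Matrix.of fun i j : Fin (n + 5) =>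
        if i = 0 ∧ (j : ℕ) < 4 then 0 else A i j).permanent
      = ∑ j : Fin (n + 5), (if (j : ℕ) < 4 then 0 else A 0 j) * (M j).permanent := by
    rw [permanent_succ_row_zero]
    refine Finset.sum_congr rfl fun j _ => ?_
    have hmin : (Matrix.of fun i j : Fin (n + 5) =>
          if i = 0 ∧ (j : ℕ) < 4 then 0 else A i j).submatrix Fin.succ j.succAbove = M j := by
      ext i k
      simp [hM, Fin.succ_ne_zero]
    rw [hmin]
    congr 1
    by_cases hj : (j : ℕ) < 4 <;> simp [hj]
  -- the first matrix
  have h1 : (Matrix.of fun i j : Fin (n + 4) =>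
        if (j : ℕ) = 0 then A 0 0 * A i.succ 1 + A 0 1 * A i.succ 0
        else A i.succ j.succ).permanent
      = A 0 0 * (M 0).permanent + A 0 1 * (M 1).permanent := by
    have e1 : (Matrix.of fun i j : Fin (n + 4) =>
          if (j : ℕ) = 0 then A 0 0 * A i.succ 1 + A 0 1 * A i.succ 0
          else A i.succ j.succ)
        = (M 0).updateCol 0
            (A 0 0 • (fun i => A i.succ 1) + A 0 1 • (fun i => A i.succ 0)) := by
      ext i j
      by_cases hj : (j : ℕ) = 0 <;>
        simp [hj, hM, Matrix.updateCol_apply, Fin.succAbove_zero]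
    have eu : (M 0).updateCol 0 (fun i => A i.succ 1) = M 0 := by
      ext i j
      by_cases hj : (j : ℕ) = 0 <;>
        simp [hj, hM, Matrix.updateCol_apply, Fin.succAbove_zero, Fin.ext_iff]
      exact congrArg _ (Fin.ext (by simp [hj])).symm
    have ev : (M 0).updateCol 0 (fun i => A i.succ 0) = M 1 := by
      ext i j
      by_cases hj : (j : ℕ) = 0 <;>
        simp [hj, hM, Matrix.updateCol_apply, Fin.succAbove, Fin.lt_def, Fin.ext_iff]
      exact congrArg _ (Fin.ext (by simp [hj])).symm
    rw [e1, permanent_updateCol_add', Matrix.permanent_updateCol_smul,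
      Matrix.permanent_updateCol_smul, eu, ev]
  -- the second matrix
  have h2 : (Matrix.of fun i j : Fin (n + 4) =>
        if (j : ℕ) = 2 then A 0 2 * A i.succ 3 + A 0 3 * A i.succ 2
        else if (j : ℕ) < 2 then A i.succ (j.castSucc)
        else A i.succ j.succ).permanent
      = A 0 2 * (M 2).permanent + A 0 3 * (M 3).permanent := by
    have h2v : ((2 : Fin (n + 5)) : ℕ) = 2 := rfl
    have h3v : ((3 : Fin (n + 5)) : ℕ) = 3 := rfl
    have h2v' : ((2 : Fin (n + 4)) : ℕ) = 2 := rfl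
    have hm1 : 2 % (n + 4) = 2 := Nat.mod_eq_of_lt (by omega)
    have hm2 : 2 % (n + 4 + 1) = 2 := Nat.mod_eq_of_lt (by omega)
    have hm3 : 3 % (n + 4 + 1) = 3 := Nat.mod_eq_of_lt (by omega)
    have hm6 : 3 % (n + 5) = 3 := Nat.mod_eq_of_lt (by omega)
    have hm7 : 2 % (n + 5) = 2 := Nat.mod_eq_of_lt (by omega)
    have e2 : (Matrix.of fun i j : Fin (n + 4) =>
          if (j : ℕ) = 2 then A 0 2 * A i.succ 3 + A 0 3 * A i.succ 2
          else if (j : ℕ) < 2 then A i.succ (j.castSucc)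
          else A i.succ j.succ)
        = (M 2).updateCol 2
            (A 0 2 • (fun i => A i.succ 3) + A 0 3 • (fun i => A i.succ 2)) := by
      ext i j
      by_cases hj : (j : ℕ) = 2 <;>
        simp [hj, hM, Matrix.updateCol_apply, Fin.succAbove, Fin.lt_def, Fin.ext_iff,
          h2v, h2v', hm1, hm2, hm3]
      exact (apply_ite (A i.succ) _ _ _).symm
    have eu : (M 2).updateCol 2 (fun i => A i.succ 3) = M 2 := by
      ext i j
      by_cases hj : (j : ℕ) = 2 <;>
        simp [hj, hM, Matrix.updateCol_apply, Fin.succAbove, Fin.lt_def, Fin.ext_iff,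
          h2v, h2v', hm1, hm2, hm3]
      exact congrArg _ (Fin.ext (by simp [hj, h3v, hm6])).symm
    have ev : (M 2).updateCol 2 (fun i => A i.succ 2) = M 3 := by
      ext i j
      by_cases hj : (j : ℕ) = 2 <;>
        simp [hj, hM, Matrix.updateCol_apply, Fin.succAbove, Fin.lt_def, Fin.ext_iff,
          h2v, h2v', h3v, hm1, hm2, hm3]
      · exact congrArg _ (Fin.ext (by simp [hj, h2v, hm7])).symm
      · congr 1
        split_ifs with ha hb hb <;> first | rfl | omega
    rw [e2, permanent_updateCol_add', Matrix.permanent_updateCol_smul,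
      Matrix.permanent_updateCol_smul, eu, ev]
  rw [expA, h1, h2, h3]
  have key : ∀ j : Fin (n + 5), A 0 j * (M j).permanent
      = (if (j : ℕ) < 4 then A 0 j * (M j).permanent else 0)
        + (if (j : ℕ) < 4 then 0 else A 0 j) * (M j).permanent := by
    intro j; split_ifs <;> simp
  rw [Finset.sum_congr rfl (fun j _ => key j), Finset.sum_add_distrib]
  have hsum : (∑ j : Fin (n + 5), if (j : ℕ) < 4 then A 0 j * (M j).permanent else 0)
      = A 0 0 * (M 0).permanent + A 0 1 * (M 1).permanent
        + (A 0 2 * (M 2).permanent + A 0 3 * (M 3).permanent) := by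
    rw [Fin.sum_univ_succ, Fin.sum_univ_succ, Fin.sum_univ_succ, Fin.sum_univ_succ]
    have hz : (∑ x : Fin (n + 1),
        if ((x.succ.succ.succ.succ : Fin (n + 5)) : ℕ) < 4 then
          A 0 x.succ.succ.succ.succ * (M x.succ.succ.succ.succ).permanent else 0) = 0 :=
      Finset.sum_eq_zero fun x _ => if_neg (by simp only [Fin.val_succ]; omega)
    rw [hz]
    have hm4 : 2 % (5 + n) = 2 := Nat.mod_eq_of_lt (by omega)
    have hm5 : 3 % (5 + n) = 3 := Nat.mod_eq_of_lt (by omega)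
    have hm6 : 3 % (n + 5) = 3 := Nat.mod_eq_of_lt (by omega)
    have hm7 : 2 % (n + 5) = 2 := Nat.mod_eq_of_lt (by omega)
    norm_num [hm4, hm5, hm6, hm7, Fin.ext_iff, show ((2 : Fin (n + 4)).succ : Fin (n + 5)) = 3 from rfl,
      show ((3 : Fin (n + 5)) : ℕ) = 3 from rfl]
    ring
  rw [hsum]
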